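/- arXiv:1210.3240 — 4 statements merged into one kernel-verified Lean document; each statement's English description precedes it below -/
import Mathlib

section
/- Let ν be a probability measure on S = [0,∞) × E (E ⊂ (0,∞) compact) of the form ν(dx,dv) = ν(x,dv) dx that is invariant for the transition kernel P_B((x,v),(dx',dv')) = (B(2x')/(v x')) 1_{x' ≥ x/2} exp(-∫_{x/2}^{x'} B(2s)/(v s) ds) ρ(v,dv') dx', where B is continuous, B(0)=0 and ∫^∞ B(2s)/s ds = ∞. Then for Lebesgue-a.e. y > 0, the marginal density ν(y) = ∫_E ν(y,dv) satisfies ν(y) = (B(2y)/y) · E_ν[ (1/τ₀) 1_{ξ₀ ≤ 2y, ξ₁ ≥ y} ], where (ξ₀,τ₀) ∼ ν and ξ₁ is the offspring size at birth given parent (ξ₀,τ₀) under P_B. -/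
open MeasureTheory Set
open scoped ENNReal

/-- Density of the offspring's size at birth `x'` given the parent's size at birth `x`
and growth rate `v`, for the division rate `B`. -/
noncomputable def offspringDens (B : ℝ → ℝ) (x v x' : ℝ) : ℝ :=
  if x / 2 ≤ x' then
    B (2 * x') / (v * x') *
      Real.exp (-(∫ s in Set.Ioc (x / 2) x', B (2 * s) / (v * s)))
  else 0

open Filter

lemma measurable_parLam (B : ℝ → ℝ) (hBc : Continuous B) :
    Measurable (fun q : (ℝ × ℝ) × ℝ =>
      ∫ s in Set.Ioc (q.1.1 / 2) q.2, B (2 * s) / (q.1.2 * s)) := by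
  have h1 : ∀ q : (ℝ × ℝ) × ℝ,
      (∫ s in Set.Ioc (q.1.1 / 2) q.2, B (2 * s) / (q.1.2 * s))
        = ∫ s, (Set.Ioc (q.1.1/2) q.2).indicator (fun s => B (2*s)/(q.1.2*s)) s := fun q =>
    (integral_indicator measurableSet_Ioc).symm
  simp_rw [h1]
  have hSM : StronglyMeasurable (fun z : ((ℝ × ℝ) × ℝ) × ℝ =>
      (Set.Ioc (z.1.1.1/2) z.1.2).indicator (fun s => B (2*s)/(z.1.1.2*s)) z.2) := by
    apply Measurable.stronglyMeasurable
    have h2 : (fun z : ((ℝ×ℝ)×ℝ)×ℝ =>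
        (Set.Ioc (z.1.1.1/2) z.1.2).indicator (fun s => B (2*s)/(z.1.1.2*s)) z.2)
        = fun z => if z.1.1.1/2 < z.2 ∧ z.2 ≤ z.1.2 then B (2*z.2)/(z.1.1.2*z.2) else 0 := by
      funext z; simp [Set.indicator_apply, Set.mem_Ioc]
    rw [h2]
    have hm1 : Measurable (fun z : ((ℝ×ℝ)×ℝ)×ℝ => z.1.1.1/2) := by fun_prop
    have hm2 : Measurable (fun z : ((ℝ×ℝ)×ℝ)×ℝ => z.2) := by fun_prop
    have hm3 : Measurable (fun z : ((ℝ×ℝ)×ℝ)×ℝ => z.1.2) := by fun_prop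
    have hm4 : Measurable (fun z : ((ℝ×ℝ)×ℝ)×ℝ => B (2*z.2)/(z.1.1.2*z.2)) := by
      apply Measurable.div
      · exact hBc.measurable.comp (by fun_prop)
      · fun_prop
    exact Measurable.ite ((measurableSet_lt hm1 hm2).inter (measurableSet_le hm2 hm3))
      hm4 measurable_const
  exact hSM.integral_prod_right'.measurable

lemma measurable_offspringDens (B : ℝ → ℝ) (hBc : Continuous B) :
    Measurable (fun q : (ℝ × ℝ) × ℝ => offspringDens B q.1.1 q.1.2 q.2) := by
  unfold offspringDens
  have hm1 : Measurable (fun q : (ℝ×ℝ)×ℝ => q.1.1/2) := by fun_prop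
  have hm2 : Measurable (fun q : (ℝ×ℝ)×ℝ => q.2) := by fun_prop
  have hm4 : Measurable (fun q : (ℝ×ℝ)×ℝ => B (2*q.2)/(q.1.2*q.2)) := by
    apply Measurable.div
    · exact hBc.measurable.comp (by fun_prop)
    · fun_prop
  exact Measurable.ite (measurableSet_le hm1 hm2)
    (hm4.mul (Real.continuous_exp.measurable.comp (measurable_parLam B hBc).neg))
    measurable_const

lemma lam_tendsto_atTop (B : ℝ → ℝ) (hBc : Continuous B) (hBnn : ∀ x, 0 ≤ B x)
    (hdiv : ∀ x > 0, ∫⁻ s in Set.Ioi (x / 2), ENNReal.ofReal (B (2 * s) / s) = ⊤)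
    {x v : ℝ} (hx : 0 < x) (hv : 0 < v) :
    Tendsto (fun t => ∫ s in Set.Ioc (x/2) t, B (2*s) / (v*s)) atTop atTop := by
  set a := x/2 with ha_def
  have ha : 0 < a := by positivity
  set h : ℝ → ℝ := fun s => B (2*s) / (v*s) with hh
  have hmeas : Measurable h := by
    apply Measurable.div
    · exact hBc.measurable.comp (by fun_prop)
    · fun_prop
  have hnn : ∀ s, 0 < s → 0 ≤ h s := fun s hs =>
    div_nonneg (hBnn _) (le_of_lt (mul_pos hv hs))
  have hcontOn : ∀ (c d : ℝ), 0 < c → ContinuousOn h (Icc c d) := by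
    intro c d hc
    apply ContinuousOn.div
    · exact (hBc.comp (continuous_const.mul continuous_id)).continuousOn
    · exact (continuous_const.mul continuous_id).continuousOn
    · intro s hs; exact ne_of_gt (mul_pos hv (lt_of_lt_of_le hc hs.1))
  have hIntIoc : ∀ t : ℝ, IntegrableOn h (Ioc a t) := by
    intro t
    rcases le_or_gt a t with hat | hta
    · exact ((hcontOn a t ha).integrableOn_Icc).mono_set Ioc_subset_Icc_self
    · rw [Ioc_eq_empty (by exact not_lt.mpr hta.le)]
      exact integrableOn_empty
  have hmono : Monotone (fun t => ∫ s in Set.Ioc a t, h s) := by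
    intro t t' htt'
    apply setIntegral_mono_set (hIntIoc t')
    · filter_upwards [ae_restrict_mem measurableSet_Ioc] with s hs
      exact hnn s (lt_trans ha hs.1)
    · exact HasSubset.Subset.eventuallyLE (Ioc_subset_Ioc_right htt')
  apply tendsto_atTop_atTop_of_monotone hmono
  by_contra hbdd
  push_neg at hbdd
  obtain ⟨b, hb⟩ := hbdd
  -- scaled divergence
  have key : ∫⁻ s in Set.Ioi a, ENNReal.ofReal (h s) = ⊤ := by
    have e1 : ∀ s : ℝ, ENNReal.ofReal (h s)
        = ENNReal.ofReal (1/v) * ENNReal.ofReal (B (2*s)/s) := by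
      intro s
      rw [← ENNReal.ofReal_mul (by positivity)]
      congr 1
      rw [div_mul_div_comm, one_mul]
    simp_rw [e1]
    rw [lintegral_const_mul _ (by
      apply Measurable.ennreal_ofReal
      apply Measurable.div
      · exact hBc.measurable.comp (by fun_prop)
      · fun_prop)]
    rw [hdiv x hx]
    exact ENNReal.mul_top (ne_of_gt (ENNReal.ofReal_pos.mpr (by positivity)))
  -- union decomposition
  have hU : Set.Ioi a = ⋃ n : ℕ, Set.Ioc a (a + n) := by
    ext s
    simp only [Set.mem_Ioi, Set.mem_iUnion, Set.mem_Ioc]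
    constructor
    · intro hs
      obtain ⟨n, hn⟩ := exists_nat_ge (s - a)
      exact ⟨n, hs, by linarith⟩
    · rintro ⟨n, hn, -⟩; exact hn
  rw [hU, setLIntegral_iUnion_of_directed] at key
  · have hbound : ∀ n : ℕ, ∫⁻ s in Set.Ioc a (a + n), ENNReal.ofReal (h s)
        ≤ ENNReal.ofReal b := by
      intro n
      have : ∫⁻ s in Set.Ioc a (a + n), ENNReal.ofReal (h s)
          = ENNReal.ofReal (∫ s in Set.Ioc a (a + n), h s) := by
        rw [← ofReal_integral_eq_lintegral_ofReal (hIntIoc _)]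
        filter_upwards [ae_restrict_mem measurableSet_Ioc] with s hs
        exact hnn s (lt_trans ha hs.1)
      rw [this]
      exact ENNReal.ofReal_le_ofReal (hb (a + n)).le
    have := iSup_le hbound
    rw [key] at this
    exact (lt_irrefl _ (lt_of_le_of_lt this ENNReal.ofReal_lt_top)).elim
  · exact Monotone.directed_le fun m n hmn =>
      Ioc_subset_Ioc_right (by exact_mod_cast add_le_add_right (Nat.cast_le.mpr hmn) a)

lemma tail_integral (B : ℝ → ℝ) (hBc : Continuous B) (hBnn : ∀ x, 0 ≤ B x)
    (hdiv : ∀ x > 0, ∫⁻ s in Set.Ioi (x / 2), ENNReal.ofReal (B (2 * s) / s) = ⊤)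
    {x v y : ℝ} (hx : 0 < x) (hv : 0 < v) (hy : 0 < y) (hxy : x / 2 ≤ y) :
    ∫ x' in Set.Ici y, offspringDens B x v x'
      = Real.exp (-(∫ s in Set.Ioc (x/2) y, B (2*s) / (v*s))) := by
  set a := x/2 with ha_def
  have ha : 0 < a := by positivity
  set h : ℝ → ℝ := fun s => B (2*s) / (v*s) with hh
  have hcA : ∀ s : ℝ, 0 < s → ContinuousAt h s := by
    intro s hs
    apply ContinuousAt.div
    · exact (hBc.comp (continuous_const.mul continuous_id)).continuousAt
    · exact (continuous_const.mul continuous_id).continuousAt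
    · exact ne_of_gt (mul_pos hv hs)
  have hcOn : ContinuousOn h (Ioi 0) := fun s hs => (hcA s hs).continuousWithinAt
  set Φ : ℝ → ℝ := fun t => ∫ s in a..t, h s with hΦ
  have hΦeq : ∀ t, a ≤ t → Φ t = ∫ s in Set.Ioc a t, h s := fun t ht =>
    intervalIntegral.integral_of_le ht
  have hderiv : ∀ t ∈ Ici y, HasDerivAt Φ (h t) t := by
    intro t ht
    have h0t : 0 < t := lt_of_lt_of_le hy ht
    apply intervalIntegral.integral_hasDerivAt_right
    · apply ContinuousOn.intervalIntegrable
      apply hcOn.mono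
      intro s hs
      rcases le_total a t with hat | hta
      · rw [uIcc_of_le hat] at hs; exact lt_of_lt_of_le ha hs.1
      · rw [uIcc_of_ge hta] at hs; exact lt_of_lt_of_le h0t hs.1
    · exact hcOn.stronglyMeasurableAtFilter isOpen_Ioi _ h0t
    · exact hcA t h0t
  set Ψ : ℝ → ℝ := fun t => -Real.exp (-(Φ t)) with hΨ
  have hΨderiv : ∀ t ∈ Ici y, HasDerivAt Ψ (h t * Real.exp (-(Φ t))) t := by
    intro t ht
    have := (((hderiv t ht).neg).exp).neg
    refine this.congr_deriv ?_
    rw [Pi.neg_apply]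
    ring
  have hΨtend : Tendsto Ψ atTop (nhds 0) := by
    have h1 : Tendsto (fun t => ∫ s in Set.Ioc a t, h s) atTop atTop :=
      lam_tendsto_atTop B hBc hBnn hdiv hx hv
    have h2 : Tendsto Φ atTop atTop := by
      apply h1.congr'
      filter_upwards [eventually_ge_atTop a] with t ht
      exact (hΦeq t ht).symm
    have h3 : Tendsto (fun t => Real.exp (-(Φ t))) atTop (nhds 0) :=
      Real.tendsto_exp_atBot.comp (tendsto_neg_atTop_atBot.comp h2)
    have := h3.neg
    rwa [neg_zero] at this
  have hnn : ∀ t ∈ Ioi y, 0 ≤ h t * Real.exp (-(Φ t)) := fun t ht =>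
    mul_nonneg (div_nonneg (hBnn _) (le_of_lt (mul_pos hv (lt_trans hy ht)))) (Real.exp_pos _).le
  have hmain : ∫ t in Set.Ioi y, h t * Real.exp (-(Φ t)) = 0 - Ψ y :=
    integral_Ioi_of_hasDerivAt_of_nonneg' (fun t ht => hΨderiv t ht) hnn hΨtend
  have hcongr : ∀ t ∈ Set.Ioi y, offspringDens B x v t = h t * Real.exp (-(Φ t)) := by
    intro t ht
    have hat : a ≤ t := le_trans hxy (le_of_lt ht)
    rw [offspringDens, if_pos hat, hΦeq t hat]
  calc ∫ x' in Set.Ici y, offspringDens B x v x'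
      = ∫ x' in Set.Ioi y, offspringDens B x v x' := integral_Ici_eq_integral_Ioi
    _ = ∫ t in Set.Ioi y, h t * Real.exp (-(Φ t)) :=
        setIntegral_congr_fun measurableSet_Ioi hcongr
    _ = 0 - Ψ y := hmain
    _ = Real.exp (-(Φ y)) := by simp [hΨ]
    _ = Real.exp (-(∫ s in Set.Ioc a y, h s)) := by rw [hΦeq y hxy]

set_option maxHeartbeats 1000000 in
/-- Representation of the marginal density of the invariant measure:
`ν(y) = (B(2y)/y) · E_ν[(1/τ₀) 1_{ξ₀ ≤ 2y, ξ₁ ≥ y}]` for a.e. `y > 0`. -/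
theorem invariant_marginal_representation
    (B : ℝ → ℝ) (hBc : Continuous B) (hBnn : ∀ x, 0 ≤ B x) (hB0 : B 0 = 0)
    (hdiv : ∀ x > 0, ∫⁻ s in Set.Ioi (x / 2), ENNReal.ofReal (B (2 * s) / s) = ⊤)
    (E : Set ℝ) (hE : IsCompact E) (hEpos : E ⊆ Set.Ioi 0)
    (ρ : ℝ → Measure ℝ) (hρ : ∀ v ∈ E, IsProbabilityMeasure (ρ v))
    (hρE : ∀ v ∈ E, ρ v E = 1)
    (ν : Measure (ℝ × ℝ)) (hνp : IsProbabilityMeasure ν)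
    (hsupp : ν ((Set.Ioi 0 ×ˢ E)ᶜ) = 0)
    (νm : ℝ → ℝ) (hνm : Measurable νm) (hνmnn : ∀ y, 0 ≤ νm y)
    (hmarg : ν.map Prod.fst
        = (volume.restrict (Set.Ioi 0)).withDensity fun y => ENNReal.ofReal (νm y))
    (hinv : ∀ f : ℝ × ℝ → ℝ≥0∞, Measurable f →
      ∫⁻ p, f p ∂ν =
        ∫⁻ p, (∫⁻ x' in Set.Ioi (0 : ℝ),
          (∫⁻ v', f (x', v') ∂(ρ p.2)) * ENNReal.ofReal (offspringDens B p.1 p.2 x')) ∂ν) :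
    ∀ᵐ y ∂(volume.restrict (Set.Ioi 0)),
      νm y = (B (2 * y) / y) *
        ∫ p, (if p.1 ≤ 2 * y then
                (1 / p.2) * ∫ x' in Set.Ici y, offspringDens B p.1 p.2 x'
              else 0) ∂ν := by

  classical
  have hSmeas : MeasurableSet (Set.Ioi (0:ℝ) ×ˢ E) :=
    measurableSet_Ioi.prod hE.isClosed.measurableSet
  have hν1 : ν (Set.Ioi 0 ×ˢ E) = 1 := by
    have h := measure_add_measure_compl (μ := ν) hSmeas
    rw [hsupp, add_zero, measure_univ] at h
    exact h
  have hEne : E.Nonempty := by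
    by_contra hE0
    rw [Set.not_nonempty_iff_eq_empty] at hE0
    rw [hE0] at hν1
    simp at hν1
  obtain ⟨vmin, hvminE, hvminle⟩ : ∃ vmin ∈ E, ∀ v ∈ E, vmin ≤ v := by
    obtain ⟨w, hwE, hw⟩ := hE.exists_isMinOn hEne continuousOn_id
    exact ⟨w, hwE, fun v hv => hw hv⟩
  have hvmin : (0:ℝ) < vmin := hEpos hvminE
  have νae : ∀ᵐ p ∂ν, p ∈ Set.Ioi 0 ×ˢ E := by
    rw [ae_iff]; exact hsupp
  have hdm : Measurable (fun q : (ℝ×ℝ)×ℝ =>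
      ENNReal.ofReal (offspringDens B q.1.1 q.1.2 q.2)) :=
    (measurable_offspringDens B hBc).ennreal_ofReal
  set g : ℝ → ℝ≥0∞ := fun y => ∫⁻ p, ENNReal.ofReal (offspringDens B p.1 p.2 y) ∂ν with hgdef
  have hgmeas : Measurable g := hdm.lintegral_prod_left'
  have hdnn : ∀ x v x' : ℝ, 0 < v → 0 < x' → 0 ≤ offspringDens B x v x' := by
    intro x v x' hv hx'
    unfold offspringDens
    split
    · exact mul_nonneg (div_nonneg (hBnn _) (mul_pos hv hx').le) (Real.exp_pos _).le
    · exact le_rfl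
  -- Step 1: the marginal equals withDensity g
  have hmap : ν.map Prod.fst = (volume.restrict (Set.Ioi 0)).withDensity g := by
    ext s hs
    rw [Measure.map_apply measurable_fst hs, withDensity_apply _ hs]
    have hf : Measurable (fun q : ℝ×ℝ => Set.indicator s (fun _ => (1:ℝ≥0∞)) q.1) :=
      (measurable_const.indicator hs).comp measurable_fst
    have h0 := hinv _ hf
    have hL : ∫⁻ p : ℝ×ℝ, Set.indicator s (fun _ => (1:ℝ≥0∞)) p.1 ∂ν
        = ν (Prod.fst ⁻¹' s) := by
      have heq : ∀ p : ℝ×ℝ, Set.indicator s (fun _ => (1:ℝ≥0∞)) p.1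
          = Set.indicator (Prod.fst ⁻¹' s) (fun _ => (1:ℝ≥0∞)) p := by
        intro p; by_cases hp : p.1 ∈ s <;>
          simp [hp, Set.indicator_apply, Set.mem_preimage]
      simp_rw [heq]
      rw [lintegral_indicator_const (hs.preimage measurable_fst), one_mul]
    have hR : ∫⁻ p : ℝ×ℝ, (∫⁻ x' in Set.Ioi (0:ℝ),
          (∫⁻ _ : ℝ, Set.indicator s (fun _ => (1:ℝ≥0∞)) x' ∂(ρ p.2))
            * ENNReal.ofReal (offspringDens B p.1 p.2 x')) ∂ν
        = ∫⁻ p : ℝ×ℝ, (∫⁻ x' in Set.Ioi (0:ℝ),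
          Set.indicator s (fun _ => (1:ℝ≥0∞)) x'
            * ENNReal.ofReal (offspringDens B p.1 p.2 x')) ∂ν := by
      apply lintegral_congr_ae
      filter_upwards [νae] with p hp
      have hprob : IsProbabilityMeasure (ρ p.2) := hρ p.2 hp.2
      have hconst : ∀ x' : ℝ, (∫⁻ _ : ℝ, Set.indicator s (fun _ => (1:ℝ≥0∞)) x' ∂(ρ p.2))
          = Set.indicator s (fun _ => (1:ℝ≥0∞)) x' := by
        intro x'
        rw [lintegral_const, measure_univ, mul_one]
      simp_rw [hconst]
    have hswap : ∫⁻ p : ℝ×ℝ, (∫⁻ x' in Set.Ioi (0:ℝ),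
          Set.indicator s (fun _ => (1:ℝ≥0∞)) x'
            * ENNReal.ofReal (offspringDens B p.1 p.2 x')) ∂ν
        = ∫⁻ x' in Set.Ioi (0:ℝ), (∫⁻ p : ℝ×ℝ,
          Set.indicator s (fun _ => (1:ℝ≥0∞)) x'
            * ENNReal.ofReal (offspringDens B p.1 p.2 x') ∂ν) := by
      apply lintegral_lintegral_swap
      apply Measurable.aemeasurable
      exact (((measurable_const.indicator hs).comp measurable_snd).mul hdm)
    have hpull : ∫⁻ x' in Set.Ioi (0:ℝ), (∫⁻ p : ℝ×ℝ,
          Set.indicator s (fun _ => (1:ℝ≥0∞)) x'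
            * ENNReal.ofReal (offspringDens B p.1 p.2 x') ∂ν)
        = ∫⁻ x' in Set.Ioi (0:ℝ), Set.indicator s (fun _ => (1:ℝ≥0∞)) x' * g x' := by
      apply lintegral_congr
      intro x'
      have hmx : Measurable (fun p : ℝ×ℝ => ENNReal.ofReal (offspringDens B p.1 p.2 x')) :=
        hdm.comp (measurable_id.prodMk measurable_const)
      rw [lintegral_const_mul _ hmx]
    have hfin : ∫⁻ x' in Set.Ioi (0:ℝ), Set.indicator s (fun _ => (1:ℝ≥0∞)) x' * g x'
        = ∫⁻ x' in s, g x' ∂(volume.restrict (Set.Ioi 0)) := by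
      have heq2 : ∀ x' : ℝ, Set.indicator s (fun _ => (1:ℝ≥0∞)) x' * g x'
          = Set.indicator s g x' := by
        intro x'; by_cases hx' : x' ∈ s <;> simp [hx']
      simp_rw [heq2]
      rw [lintegral_indicator hs]
    rw [hL, hR, hswap, hpull, hfin] at h0
    exact h0
  -- Step 2: a.e. identification of the density
  have hae1 : (fun y => ENNReal.ofReal (νm y)) =ᵐ[volume.restrict (Set.Ioi 0)] g := by
    apply ae_eq_of_forall_setLIntegral_eq_of_sigmaFinite hνm.ennreal_ofReal hgmeas
    intro s hs _
    have h1 : ∫⁻ y in s, ENNReal.ofReal (νm y) ∂(volume.restrict (Set.Ioi 0))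
        = ν.map Prod.fst s := by rw [hmarg, withDensity_apply _ hs]
    have h2 : ∫⁻ y in s, g y ∂(volume.restrict (Set.Ioi 0)) = ν.map Prod.fst s := by
      rw [hmap, withDensity_apply _ hs]
    rw [h1, h2]
  -- Step 3: pointwise identity for g
  have key : ∀ y : ℝ, 0 < y → g y =
      ENNReal.ofReal ((B (2*y)/y) * ∫ p, (if p.1 ≤ 2*y then
        (1/p.2) * ∫ x' in Set.Ici y, offspringDens B p.1 p.2 x' else 0) ∂ν) := by
    intro y hy
    set G : ℝ×ℝ → ℝ := fun p => if p.1 ≤ 2*y then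
        (1/p.2) * Real.exp (-(∫ s in Set.Ioc (p.1/2) y, B (2*s)/(p.2*s))) else 0 with hGdef
    have hLam0 : Measurable ((fun q : (ℝ×ℝ)×ℝ => ∫ s in Set.Ioc (q.1.1/2) q.2,
        B (2*s)/(q.1.2*s)) ∘ (fun p : ℝ×ℝ => (p, y))) :=
      (measurable_parLam B hBc).comp (measurable_id.prodMk measurable_const)
    have hLam : Measurable (fun p : ℝ×ℝ => ∫ s in Set.Ioc (p.1/2) y, B (2*s)/(p.2*s)) := hLam0
    have hGmeas : Measurable G := by
      refine Measurable.ite (measurableSet_le measurable_fst measurable_const) ?_ measurable_const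
      exact (measurable_const.div measurable_snd).mul
        (Real.continuous_exp.measurable.comp hLam.neg)
    have hGnn : ∀ᵐ p ∂ν, 0 ≤ G p := by
      filter_upwards [νae] with p hp
      have hv : (0:ℝ) < p.2 := hEpos hp.2
      rw [hGdef]
      dsimp only
      split
      · exact mul_nonneg (by positivity) (Real.exp_pos _).le
      · exact le_rfl
    have hGbdd : ∀ᵐ p ∂ν, ‖G p‖ ≤ 1/vmin := by
      filter_upwards [νae] with p hp
      have hv : (0:ℝ) < p.2 := hEpos hp.2
      rw [hGdef]
      dsimp only
      split
      · rw [Real.norm_eq_abs,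
          abs_of_nonneg (mul_nonneg (by positivity) (Real.exp_pos _).le)]
        have hexp : Real.exp (-(∫ s in Set.Ioc (p.1/2) y, B (2*s)/(p.2*s))) ≤ 1 := by
          rw [Real.exp_le_one_iff, neg_nonpos]
          apply setIntegral_nonneg measurableSet_Ioc
          intro t ht
          have hx0 : (0:ℝ) < p.1 := hp.1
          have ht0 : (0:ℝ) < t := lt_trans (by positivity) ht.1
          exact div_nonneg (hBnn _) (mul_pos hv ht0).le
        calc (1/p.2) * Real.exp (-(∫ s in Set.Ioc (p.1/2) y, B (2*s)/(p.2*s)))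
            ≤ (1/p.2) * 1 := by
              apply mul_le_mul_of_nonneg_left hexp (by positivity)
          _ = 1/p.2 := mul_one _
          _ ≤ 1/vmin := one_div_le_one_div_of_le hvmin (hvminle p.2 hp.2)
      · rw [norm_zero]; positivity
    have hGint : Integrable G ν :=
      Integrable.mono' (integrable_const (1/vmin)) hGmeas.aestronglyMeasurable hGbdd
    have hpt : ∀ᵐ p ∂ν, ENNReal.ofReal (offspringDens B p.1 p.2 y)
        = ENNReal.ofReal ((B (2*y)/y) * G p) := by
      filter_upwards [νae] with p hp
      have hv : (0:ℝ) < p.2 := hEpos hp.2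
      rw [hGdef]
      dsimp only
      by_cases hcase : p.1 ≤ 2*y
      · have hxy2 : p.1/2 ≤ y := by linarith
        rw [offspringDens, if_pos hxy2, if_pos hcase]
        congr 1
        ring
      · have hxy2 : ¬ (p.1/2 ≤ y) := by intro hc; exact hcase (by linarith)
        rw [offspringDens, if_neg hxy2, if_neg hcase, mul_zero]
    have hcalc : g y = ENNReal.ofReal ((B (2*y)/y) * ∫ p, G p ∂ν) := by
      calc g y = ∫⁻ p, ENNReal.ofReal ((B (2*y)/y) * G p) ∂ν := lintegral_congr_ae hpt
        _ = ENNReal.ofReal (∫ p, (B (2*y)/y) * G p ∂ν) := by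
            rw [← ofReal_integral_eq_lintegral_ofReal (hGint.const_mul _) ?_]
            filter_upwards [hGnn] with p hp
            exact mul_nonneg (div_nonneg (hBnn _) hy.le) hp
        _ = ENNReal.ofReal ((B (2*y)/y) * ∫ p, G p ∂ν) := by rw [integral_const_mul]
    rw [hcalc]
    congr 2
    apply integral_congr_ae
    filter_upwards [νae] with p hp
    have hv : (0:ℝ) < p.2 := hEpos hp.2
    rw [hGdef]
    dsimp only
    by_cases hcase : p.1 ≤ 2*y
    · rw [if_pos hcase, if_pos hcase,
        tail_integral B hBc hBnn hdiv hp.1 hv hy (by linarith)]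
    · rw [if_neg hcase, if_neg hcase]
  -- Step 4: conclude
  have hmem : ∀ᵐ y ∂(volume.restrict (Set.Ioi 0)), y ∈ Set.Ioi (0:ℝ) :=
    ae_restrict_mem measurableSet_Ioi
  filter_upwards [hae1, hmem] with y h1 h2
  have hy : (0:ℝ) < y := h2
  have h3 : ENNReal.ofReal (νm y)
      = ENNReal.ofReal ((B (2*y)/y) * ∫ p, (if p.1 ≤ 2*y then
          (1/p.2) * ∫ x' in Set.Ici y, offspringDens B p.1 p.2 x' else 0) ∂ν) := by
    rw [h1]; exact key y hy
  have hRnn : 0 ≤ (B (2*y)/y) * ∫ p, (if p.1 ≤ 2*y then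
      (1/p.2) * ∫ x' in Set.Ici y, offspringDens B p.1 p.2 x' else 0) ∂ν := by
    apply mul_nonneg (div_nonneg (hBnn _) hy.le)
    apply integral_nonneg_of_ae
    filter_upwards [νae] with p hp
    have hv : (0:ℝ) < p.2 := hEpos hp.2
    split
    · apply mul_nonneg (by positivity)
      apply setIntegral_nonneg measurableSet_Ici
      intro x' hx'
      exact hdnn p.1 p.2 x' hv (lt_of_lt_of_le hy hx')
    · exact le_rfl
  exact (ENNReal.ofReal_eq_ofReal_iff (hνmnn y) hRnn).mp h3
end

section
/- Under the assumptions of the invariant-measure representation, the division rate can be recovered from the invariant measure: for a.e. y > 0 with E_ν[(1/τ₀) 1_{ξ₀ ≤ y, ξ₁ ≥ y/2}] > 0, one has B(y) = (y/2) · ν(y/2) / E_ν[(1/τ₀) 1_{ξ₀ ≤ y, ξ₁ ≥ y/2}]. -/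
open MeasureTheory Set Filter
open scoped ENNReal Topology

lemma measJ {B : ℝ → ℝ} (hBc : Continuous B) :
    Measurable (fun q : (ℝ × ℝ) × ℝ =>
      ∫ s in Set.Ioc (q.1.1 / 2) q.2, B (2 * s) / (q.1.2 * s)) := by
  have hF : Measurable (fun r : ((ℝ × ℝ) × ℝ) × ℝ =>
      (Set.Ioc (r.1.1.1 / 2) r.1.2).indicator (fun s => B (2 * s) / (r.1.1.2 * s)) r.2) := by
    have h1 : Measurable (fun r : ((ℝ × ℝ) × ℝ) × ℝ => B (2 * r.2) / (r.1.1.2 * r.2)) :=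
      (hBc.measurable.comp (measurable_const.mul measurable_snd)).div
        ((measurable_fst.comp measurable_fst).snd.mul measurable_snd)
    have h2 : MeasurableSet {r : ((ℝ × ℝ) × ℝ) × ℝ | r.2 ∈ Set.Ioc (r.1.1.1 / 2) r.1.2} := by
      apply MeasurableSet.inter
      · exact measurableSet_lt ((measurable_fst.comp measurable_fst).fst.div measurable_const)
          measurable_snd
      · exact measurableSet_le measurable_snd measurable_fst.snd
    have : (fun r : ((ℝ × ℝ) × ℝ) × ℝ =>
        (Set.Ioc (r.1.1.1 / 2) r.1.2).indicator (fun s => B (2 * s) / (r.1.1.2 * s)) r.2)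
        = fun r => if r ∈ {r : ((ℝ × ℝ) × ℝ) × ℝ | r.2 ∈ Set.Ioc (r.1.1.1 / 2) r.1.2}
            then B (2 * r.2) / (r.1.1.2 * r.2) else 0 := by
      funext r; simp [Set.indicator_apply]
    rw [this]
    exact Measurable.ite h2 h1 measurable_const
  have hSM := (hF.stronglyMeasurable).integral_prod_right' (ν := (volume : Measure ℝ))
  have : (fun q : (ℝ × ℝ) × ℝ => ∫ s in Set.Ioc (q.1.1 / 2) q.2, B (2 * s) / (q.1.2 * s))
      = fun q => ∫ s, (Set.Ioc (q.1.1 / 2) q.2).indicator (fun s => B (2 * s) / (q.1.2 * s)) s := by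
    funext q
    rw [MeasureTheory.integral_indicator measurableSet_Ioc]
  rw [this]
  exact hSM.measurable

lemma measDens {B : ℝ → ℝ} (hBc : Continuous B) :
    Measurable (fun q : (ℝ × ℝ) × ℝ => offspringDens B q.1.1 q.1.2 q.2) := by
  unfold offspringDens
  have h2 : MeasurableSet {q : (ℝ × ℝ) × ℝ | q.1.1 / 2 ≤ q.2} :=
    measurableSet_le (measurable_fst.fst.div measurable_const) measurable_snd
  refine Measurable.ite h2 ?_ measurable_const
  refine Measurable.mul ?_ ?_
  · exact (hBc.measurable.comp (measurable_const.mul measurable_snd)).div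
      (measurable_fst.snd.mul measurable_snd)
  · exact Real.continuous_exp.measurable.comp (measJ hBc).neg

lemma survival_eq {B : ℝ → ℝ} (hBc : Continuous B) (hBnn : ∀ x, 0 ≤ B x)
    {x v a : ℝ}
    (hdiv : ∫⁻ s in Set.Ioi (x / 2), ENNReal.ofReal (B (2 * s) / s) = ⊤)
    (hx : 0 < x) (hv : 0 < v) (ha : x / 2 ≤ a) :
    ∫ x' in Set.Ici a, offspringDens B x v x' =
      Real.exp (-(∫ s in Set.Ioc (x / 2) a, B (2 * s) / (v * s))) := by
  have hx2 : 0 < x / 2 := by linarith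
  set h : ℝ → ℝ := fun s => B (2 * s) / (v * s) with hh
  set J : ℝ → ℝ := fun t => ∫ s in Set.Ioc (x / 2) t, h s with hJ
  have hmeas_h : Measurable h :=
    (hBc.measurable.comp (measurable_const.mul measurable_id)).div
      (measurable_const.mul measurable_id)
  have hcont_h : ∀ s : ℝ, 0 < s → ContinuousAt h s := by
    intro s hs
    exact ((hBc.comp (continuous_const.mul continuous_id)).continuousAt).div
      ((continuous_const.mul continuous_id).continuousAt) (by positivity)
  have hnn_h : ∀ s : ℝ, 0 < s → 0 ≤ h s := by
    intro s hs
    exact div_nonneg (hBnn _) (by positivity)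
  have hInt : ∀ c : ℝ, IntegrableOn h (Set.Icc (x / 2) c) := by
    intro c
    apply ContinuousOn.integrableOn_compact isCompact_Icc
    intro s hs
    exact (hcont_h s (lt_of_lt_of_le hx2 hs.1)).continuousWithinAt
  have hIntIoc : ∀ t : ℝ, IntegrableOn h (Set.Ioc (x / 2) t) := fun t =>
    (hInt t).mono_set Set.Ioc_subset_Icc_self
  -- J as interval integral
  have hJeq : ∀ t, x / 2 ≤ t → J t = ∫ s in (x / 2)..t, h s := by
    intro t ht
    rw [intervalIntegral.integral_of_le ht]
  -- continuity of J on Ici (x/2)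
  have hJcont : ContinuousOn J (Set.Ici (x / 2)) := by
    intro t ht
    have h1 : ContinuousWithinAt J (Set.Icc (x / 2) (t + 1)) t :=
      intervalIntegral.continuousOn_primitive (hInt (t + 1)) t ⟨ht, by linarith⟩
    apply h1.mono_of_mem_nhdsWithin
    apply Filter.mem_of_superset
      (Filter.inter_mem self_mem_nhdsWithin
        (mem_nhdsWithin_of_mem_nhds (Iio_mem_nhds (lt_add_one t))))
    rintro u ⟨hu1, hu2⟩
    exact ⟨hu1, le_of_lt hu2⟩
  -- derivative of J
  have hJd : ∀ t : ℝ, x / 2 < t → HasDerivAt J (h t) t := by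
    intro t ht
    have hiv : IntervalIntegrable h volume (x / 2) t :=
      (intervalIntegrable_iff_integrableOn_Ioc_of_le (le_of_lt ht)).2 (hIntIoc t)
    have hd := intervalIntegral.integral_hasDerivAt_right hiv
      (hmeas_h.stronglyMeasurable.stronglyMeasurableAtFilter)
      (hcont_h t (lt_trans hx2 ht))
    apply hd.congr_of_eventuallyEq
    filter_upwards [Ioi_mem_nhds ht] with u hu
    exact hJeq u (le_of_lt hu)
  -- J tends to infinity
  have hJtop : Tendsto J atTop atTop := by
    set μh : Measure ℝ := volume.withDensity fun s => ENNReal.ofReal (h s) with hμh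
    have hμh_apply : ∀ {A : Set ℝ}, MeasurableSet A →
        μh A = ∫⁻ s in A, ENNReal.ofReal (h s) := by
      intro A hA
      rw [hμh, withDensity_apply _ hA]
    have htop : μh (Set.Ioi (x / 2)) = ⊤ := by
      rw [hμh_apply measurableSet_Ioi]
      have heq : ∀ s : ℝ, ENNReal.ofReal (h s)
          = ENNReal.ofReal v⁻¹ * ENNReal.ofReal (B (2 * s) / s) := by
        intro s
        rw [← ENNReal.ofReal_mul (by positivity)]
        congr 1
        rw [hh]; field_simp
      simp_rw [heq]
      rw [lintegral_const_mul _ (by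
        exact ENNReal.measurable_ofReal.comp
          ((hBc.measurable.comp (measurable_const.mul measurable_id)).div measurable_id))]
      rw [hdiv, ENNReal.mul_top]
      simp only [ne_eq, ENNReal.ofReal_eq_zero, not_le]
      positivity
    have hmono : Monotone (fun n : ℕ => Set.Ioc (x / 2) (x / 2 + n)) := by
      intro m n hmn
      apply Set.Ioc_subset_Ioc_right
      have : (m : ℝ) ≤ n := Nat.cast_le.2 hmn
      linarith
    have hun : (⋃ n : ℕ, Set.Ioc (x / 2) (x / 2 + n)) = Set.Ioi (x / 2) := by
      ext s
      simp only [Set.mem_iUnion, Set.mem_Ioc, Set.mem_Ioi]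
      constructor
      · rintro ⟨n, hn, _⟩; exact hn
      · intro hs
        obtain ⟨n, hn⟩ := exists_nat_ge (s - x / 2)
        exact ⟨n, hs, by linarith⟩
    have hT := tendsto_measure_iUnion_atTop (μ := μh) hmono
    rw [hun, htop] at hT
    have hJof : ∀ t : ℝ, x / 2 ≤ t → ENNReal.ofReal (J t) = μh (Set.Ioc (x / 2) t) := by
      intro t ht
      rw [hμh_apply measurableSet_Ioc]
      rw [← ofReal_integral_eq_lintegral_ofReal (hIntIoc t)]
      filter_upwards [ae_restrict_mem measurableSet_Ioc] with s hs
      exact hnn_h s (lt_trans hx2 hs.1)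
    rw [tendsto_atTop]
    intro M
    have hmem : ∀ᶠ z in 𝓝 (⊤ : ℝ≥0∞), z ∈ Set.Ioi (ENNReal.ofReal M) :=
      isOpen_Ioi.eventually_mem (by simp [ENNReal.ofReal_lt_top])
    obtain ⟨n, hn⟩ := (hT.eventually hmem).exists
    filter_upwards [eventually_ge_atTop (x / 2 + n)] with t ht'
    have h1 : μh (Set.Ioc (x / 2) (x / 2 + n)) ≤ ENNReal.ofReal (J t) := by
      rw [hJof t (by have : (0:ℝ) ≤ n := Nat.cast_nonneg n; linarith)]
      exact measure_mono (Set.Ioc_subset_Ioc_right ht')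
    by_contra hc
    push_neg at hc
    exact absurd (lt_of_lt_of_le hn h1) (not_lt.2 (ENNReal.ofReal_le_ofReal hc.le))
  -- exp(-J) tends to 0
  have hexp : Tendsto (fun t => -Real.exp (-(J t))) atTop (𝓝 0) := by
    rw [show (0 : ℝ) = -0 by norm_num]
    exact (Real.tendsto_exp_neg_atTop_nhds_zero.comp hJtop).neg
  -- the FTC computation
  set g : ℝ → ℝ := fun t => -Real.exp (-(J t)) with hg
  have hgderiv : ∀ t ∈ Set.Ioi a, HasDerivAt g (offspringDens B x v t) t := by
    intro t ht
    have htx : x / 2 < t := lt_of_le_of_lt ha ht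
    have h1 : HasDerivAt (fun u => -(J u)) (-(h t)) t := (hJd t htx).neg
    have h2 := (Real.hasDerivAt_exp (-(J t))).comp t h1
    have h3 := h2.neg
    have h4 : HasDerivAt g (h t * Real.exp (-(J t))) t := by
      exact h3.congr_deriv (by ring)
    have h5 : offspringDens B x v t = h t * Real.exp (-(J t)) := by
      rw [offspringDens, if_pos htx.le]
    rw [h5]
    exact h4
  have hgpos : ∀ t ∈ Set.Ioi a, 0 ≤ offspringDens B x v t := by
    intro t ht
    have htx : x / 2 < t := lt_of_le_of_lt ha ht
    rw [offspringDens, if_pos htx.le]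
    have hvt : 0 < v * t := by have := lt_trans hx2 htx; positivity
    exact mul_nonneg (div_nonneg (hBnn _) hvt.le) (Real.exp_pos _).le
  have hgcont : ContinuousWithinAt g (Set.Ici a) a := by
    have hJw : ContinuousWithinAt J (Set.Ici a) a :=
      (hJcont a ha).mono (Set.Ici_subset_Ici.2 ha)
    exact ((Real.continuous_exp.continuousAt.comp_continuousWithinAt hJw.neg)).neg
  have hmain := integral_Ioi_of_hasDerivAt_of_nonneg hgcont hgderiv hgpos hexp
  rw [MeasureTheory.integral_Ici_eq_integral_Ioi, hmain, hg]
  simp only [zero_sub, neg_neg]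
  rfl

/-- Recovery of the division rate from the invariant measure:
`B(y) = (y/2) ν(y/2) / E_ν[(1/τ₀) 1_{ξ₀ ≤ y, ξ₁ ≥ y/2}]` for a.e. `y > 0`
with positive denominator. -/
theorem division_rate_recovery
    (B : ℝ → ℝ) (hBc : Continuous B) (hBnn : ∀ x, 0 ≤ B x) (hB0 : B 0 = 0)
    (hdiv : ∀ x > 0, ∫⁻ s in Set.Ioi (x / 2), ENNReal.ofReal (B (2 * s) / s) = ⊤)
    (E : Set ℝ) (hE : IsCompact E) (hEpos : E ⊆ Set.Ioi 0)
    (ρ : ℝ → Measure ℝ) (hρ : ∀ v ∈ E, IsProbabilityMeasure (ρ v))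
    (hρE : ∀ v ∈ E, ρ v E = 1)
    (ν : Measure (ℝ × ℝ)) (hνp : IsProbabilityMeasure ν)
    (hsupp : ν ((Set.Ioi 0 ×ˢ E)ᶜ) = 0)
    (νm : ℝ → ℝ) (hνm : Measurable νm) (hνmnn : ∀ y, 0 ≤ νm y)
    (hmarg : ν.map Prod.fst
        = (volume.restrict (Set.Ioi 0)).withDensity fun y => ENNReal.ofReal (νm y))
    (hinv : ∀ f : ℝ × ℝ → ℝ≥0∞, Measurable f →
      ∫⁻ p, f p ∂ν =
        ∫⁻ p, (∫⁻ x' in Set.Ioi (0 : ℝ),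
          (∫⁻ v', f (x', v') ∂(ρ p.2)) * ENNReal.ofReal (offspringDens B p.1 p.2 x')) ∂ν) :
    ∀ᵐ y ∂(volume.restrict (Set.Ioi 0)),
      0 < (∫ p, (if p.1 ≤ y then
                  (1 / p.2) * ∫ x' in Set.Ici (y / 2), offspringDens B p.1 p.2 x'
                 else 0) ∂ν) →
        B y = (y / 2) * νm (y / 2) /
          ∫ p, (if p.1 ≤ y then
                  (1 / p.2) * ∫ x' in Set.Ici (y / 2), offspringDens B p.1 p.2 x'
                else 0) ∂ν := by
  -- E is nonempty and bounded away from 0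
  obtain ⟨ε, hεpos, hεle⟩ : ∃ ε > 0, ∀ v ∈ E, ε ≤ v := by
    have hEne : E.Nonempty := by
      by_contra hne
      rw [Set.not_nonempty_iff_eq_empty] at hne
      rw [hne, Set.prod_empty, Set.compl_empty] at hsupp
      rw [measure_univ] at hsupp
      exact one_ne_zero hsupp
    exact ⟨sInf E, hEpos (hE.sInf_mem hEne), fun v hv => csInf_le hE.bddBelow hv⟩
  have hdensM : Measurable (fun q : (ℝ × ℝ) × ℝ => offspringDens B q.1.1 q.1.2 q.2) :=
    measDens hBc
  set μfun : ℝ → ℝ≥0∞ :=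
    fun a => ∫⁻ p, ENNReal.ofReal (offspringDens B p.1 p.2 a) ∂ν with hμfun
  have hμfunM : Measurable μfun := by
    have h1 : Measurable (fun q : ℝ × (ℝ × ℝ) =>
        ENNReal.ofReal (offspringDens B q.2.1 q.2.2 q.1)) :=
      ENNReal.measurable_ofReal.comp (hdensM.comp measurable_swap)
    exact h1.lintegral_prod_right'
  have haeE : ∀ᵐ p ∂ν, p ∈ Set.Ioi (0:ℝ) ×ˢ E := by
    rw [ae_iff]
    exact hsupp
  -- the invariant equation identifies the marginal with density μfun
  have hmapfst : ν.map Prod.fst = (volume.restrict (Set.Ioi 0)).withDensity μfun := by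
    ext A hA
    rw [Measure.map_apply measurable_fst hA, withDensity_apply _ hA]
    have hfA : Measurable (fun p : ℝ × ℝ => A.indicator (fun _ => (1:ℝ≥0∞)) p.1) :=
      (measurable_one.indicator hA).comp measurable_fst
    have h1 := hinv _ hfA
    have hLHS : ∫⁻ p, A.indicator (fun _ => (1:ℝ≥0∞)) p.1 ∂ν = ν (Prod.fst ⁻¹' A) := by
      rw [show (fun p : ℝ × ℝ => A.indicator (fun _ => (1:ℝ≥0∞)) p.1)
          = (Prod.fst ⁻¹' A).indicator (fun _ => (1:ℝ≥0∞)) from by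
        funext p; rfl]
      rw [lintegral_indicator (hA.preimage measurable_fst)]
      simp
    have h2 : ∫⁻ p, (∫⁻ x' in Set.Ioi (0:ℝ),
          (∫⁻ v', A.indicator (fun _ => (1:ℝ≥0∞)) x' ∂(ρ p.2))
            * ENNReal.ofReal (offspringDens B p.1 p.2 x')) ∂ν
        = ∫⁻ p, (∫⁻ x' in Set.Ioi (0:ℝ),
          A.indicator (fun _ => (1:ℝ≥0∞)) x'
            * ENNReal.ofReal (offspringDens B p.1 p.2 x')) ∂ν := by
      apply lintegral_congr_ae
      filter_upwards [haeE] with p hp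
      apply lintegral_congr
      intro x'
      congr 1
      rw [lintegral_const, (hρ p.2 hp.2).measure_univ, mul_one]
    set F : (ℝ × ℝ) → ℝ → ℝ≥0∞ := fun p x' =>
      (Set.Ioi (0:ℝ) ∩ A).indicator (fun _ => (1:ℝ≥0∞)) x'
        * ENNReal.ofReal (offspringDens B p.1 p.2 x') with hF
    have hFM : Measurable (Function.uncurry F) := by
      apply Measurable.mul
      · have : (fun q : (ℝ × ℝ) × ℝ =>
            (Set.Ioi (0:ℝ) ∩ A).indicator (fun _ => (1:ℝ≥0∞)) q.2)
            = ((Set.Ioi (0:ℝ) ∩ A).indicator (fun _ => (1:ℝ≥0∞))) ∘ Prod.snd := rfl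
        exact (measurable_one.indicator (measurableSet_Ioi.inter hA)).comp measurable_snd
      · exact ENNReal.measurable_ofReal.comp hdensM
    have h3 : ∀ p : ℝ × ℝ, (∫⁻ x' in Set.Ioi (0:ℝ),
          A.indicator (fun _ => (1:ℝ≥0∞)) x'
            * ENNReal.ofReal (offspringDens B p.1 p.2 x'))
        = ∫⁻ x', F p x' := by
      intro p
      rw [← lintegral_indicator measurableSet_Ioi]
      apply lintegral_congr
      intro x'
      rw [hF]
      simp only [Set.indicator_apply, Set.mem_inter_iff]
      by_cases hx1 : x' ∈ Set.Ioi (0:ℝ) <;> by_cases hx2 : x' ∈ A <;> simp [hx1, hx2]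
    have hswap : ∫⁻ p, (∫⁻ x', F p x') ∂ν = ∫⁻ x', (∫⁻ p, F p x' ∂ν) :=
      lintegral_lintegral_swap hFM.aemeasurable
    have h4 : ∀ x' : ℝ, ∫⁻ p, F p x' ∂ν
        = (Set.Ioi (0:ℝ) ∩ A).indicator (fun _ => (1:ℝ≥0∞)) x' * μfun x' := by
      intro x'
      rw [hF]
      exact lintegral_const_mul _
        (ENNReal.measurable_ofReal.comp (hdensM.comp (measurable_id.prodMk measurable_const)))
    have h5 : ∫⁻ x', (Set.Ioi (0:ℝ) ∩ A).indicator (fun _ => (1:ℝ≥0∞)) x' * μfun x'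
        = ∫⁻ x' in A, μfun x' ∂(volume.restrict (Set.Ioi 0)) := by
      have heq : ∀ x', (Set.Ioi (0:ℝ) ∩ A).indicator (fun _ => (1:ℝ≥0∞)) x' * μfun x'
          = (Set.Ioi (0:ℝ) ∩ A).indicator μfun x' := by
        intro x'
        by_cases hx : x' ∈ Set.Ioi (0:ℝ) ∩ A <;> simp [hx, Set.indicator_apply]
      simp_rw [heq]
      rw [lintegral_indicator (measurableSet_Ioi.inter hA),
        Measure.restrict_restrict hA, Set.inter_comm]
    rw [hLHS, h2] at h1
    simp_rw [h3] at h1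
    rw [hswap] at h1
    simp_rw [h4] at h1
    rw [h5] at h1
    exact h1
  -- identify νm with μfun a.e.
  have hkey : (fun a => ENNReal.ofReal (νm a)) =ᵐ[volume.restrict (Set.Ioi 0)] μfun := by
    have hwd : (volume.restrict (Set.Ioi 0)).withDensity (fun a => ENNReal.ofReal (νm a))
        = (volume.restrict (Set.Ioi 0)).withDensity μfun := by
      rw [← hmarg, hmapfst]
    exact (withDensity_eq_iff_of_sigmaFinite
      (ENNReal.measurable_ofReal.comp hνm).aemeasurable hμfunM.aemeasurable).1 hwd
  -- scale
  have hkey2 : ∀ᵐ y ∂volume, y ∈ Set.Ioi (0:ℝ) →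
      ENNReal.ofReal (νm (y / 2)) = μfun (y / 2) := by
    have h0 : ∀ᵐ a ∂volume, a ∈ Set.Ioi (0:ℝ) → ENNReal.ofReal (νm a) = μfun a :=
      (ae_restrict_iff' measurableSet_Ioi).1 hkey
    rw [ae_iff] at h0 ⊢
    obtain ⟨N, hSN, hNm, hN0⟩ := exists_measurable_superset_of_null h0
    have hsub : {y : ℝ | ¬(y ∈ Set.Ioi (0:ℝ) → ENNReal.ofReal (νm (y / 2)) = μfun (y / 2))}
        ⊆ (fun y : ℝ => 2⁻¹ * y) ⁻¹' N := by
      intro y hy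
      simp only [Set.mem_setOf_eq, Classical.not_imp] at hy
      obtain ⟨hy1, hy2⟩ := hy
      apply hSN
      simp only [Set.mem_setOf_eq, Classical.not_imp, Set.mem_preimage]
      have h24 : 2⁻¹ * y = y / 2 := by ring
      rw [h24]
      refine ⟨?_, hy2⟩
      simp only [Set.mem_Ioi] at hy1 ⊢
      linarith
    refine measure_mono_null hsub ?_
    rw [Real.volume_preimage_mul_left (by norm_num : (2:ℝ)⁻¹ ≠ 0) N, hN0, mul_zero]
  -- main a.e. argument
  rw [ae_restrict_iff' measurableSet_Ioi]
  filter_upwards [hkey2] with y hky hyIoi hpos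
  have hy : 0 < y := hyIoi
  have hky' : ENNReal.ofReal (νm (y / 2)) = μfun (y / 2) := hky hyIoi
  set Dint : ℝ × ℝ → ℝ := fun p => if p.1 ≤ y then
      (1 / p.2) * ∫ x' in Set.Ici (y / 2), offspringDens B p.1 p.2 x' else 0 with hDint
  have hSMeas : Measurable (fun p : ℝ × ℝ =>
      ∫ x' in Set.Ici (y / 2), offspringDens B p.1 p.2 x') :=
    (hdensM.stronglyMeasurable.integral_prod_right'
      (ν := volume.restrict (Set.Ici (y / 2)))).measurable
  have hDintM : Measurable Dint := by
    rw [hDint]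
    exact Measurable.ite (measurableSet_le measurable_fst measurable_const)
      ((measurable_const.div measurable_snd).mul hSMeas) measurable_const
  have hsurv : ∀ p : ℝ × ℝ, p ∈ Set.Ioi (0:ℝ) ×ˢ E → p.1 ≤ y →
      (∫ x' in Set.Ici (y / 2), offspringDens B p.1 p.2 x')
        = Real.exp (-(∫ s in Set.Ioc (p.1 / 2) (y / 2), B (2 * s) / (p.2 * s))) := by
    rintro ⟨x, v⟩ ⟨hx, hvE⟩ hxy
    exact survival_eq hBc hBnn (hdiv x hx) hx (hEpos hvE) (by dsimp only at hxy ⊢; linarith)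
  have hJnn : ∀ p : ℝ × ℝ, p ∈ Set.Ioi (0:ℝ) ×ˢ E →
      0 ≤ ∫ s in Set.Ioc (p.1 / 2) (y / 2), B (2 * s) / (p.2 * s) := by
    intro p hp
    have hx : (0:ℝ) < p.1 := hp.1
    have hv : (0:ℝ) < p.2 := hEpos hp.2
    apply setIntegral_nonneg measurableSet_Ioc
    intro s hs
    have hs0 : 0 < s := by have := hs.1; linarith
    exact div_nonneg (hBnn _) (by positivity)
  have hDbound : ∀ᵐ p ∂ν, 0 ≤ Dint p ∧ Dint p ≤ 1 / ε := by
    filter_upwards [haeE] with p hp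
    have hx : (0:ℝ) < p.1 := hp.1
    have hv : (0:ℝ) < p.2 := hEpos hp.2
    rw [hDint]
    dsimp only
    split_ifs with hxy
    · rw [hsurv p hp hxy]
      have hexple : Real.exp (-(∫ s in Set.Ioc (p.1 / 2) (y / 2), B (2 * s) / (p.2 * s))) ≤ 1 := by
        rw [← Real.exp_zero]
        exact Real.exp_le_exp.2 (by linarith [hJnn p hp])
      constructor
      · positivity
      · calc (1 / p.2) * Real.exp (-(∫ s in Set.Ioc (p.1 / 2) (y / 2), B (2 * s) / (p.2 * s)))
            ≤ (1 / ε) * 1 := by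
              apply mul_le_mul (by
                apply one_div_le_one_div_of_le hεpos (hεle _ hp.2)) hexple (Real.exp_pos _).le
                (by positivity)
          _ = 1 / ε := mul_one _
    · exact ⟨le_refl 0, by positivity⟩
  have hpt : ∀ᵐ p ∂ν, ENNReal.ofReal (offspringDens B p.1 p.2 (y / 2))
      = ENNReal.ofReal (2 * B y / y) * ENNReal.ofReal (Dint p) := by
    filter_upwards [haeE] with p hp
    have hx : (0:ℝ) < p.1 := hp.1
    have hv : (0:ℝ) < p.2 := hEpos hp.2
    have hBy : (0:ℝ) ≤ 2 * B y / y := div_nonneg (mul_nonneg (by norm_num) (hBnn y)) hy.le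
    rw [hDint]
    dsimp only
    split_ifs with hxy
    · rw [hsurv p hp hxy]
      rw [offspringDens, if_pos (by linarith : p.1 / 2 ≤ y / 2)]
      rw [← ENNReal.ofReal_mul hBy]
      congr 1
      have h2y : 2 * (y / 2) = y := by ring
      rw [h2y]
      field_simp
    · rw [offspringDens, if_neg (by linarith : ¬ p.1 / 2 ≤ y / 2)]
      simp
  set L : ℝ≥0∞ := ∫⁻ p, ENNReal.ofReal (Dint p) ∂ν with hLdef
  have hLle : L ≤ ENNReal.ofReal (1 / ε) := by
    rw [hLdef]
    calc ∫⁻ p, ENNReal.ofReal (Dint p) ∂ν ≤ ∫⁻ _, ENNReal.ofReal (1 / ε) ∂ν :=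
        lintegral_mono_ae (hDbound.mono fun p hp => ENNReal.ofReal_le_ofReal hp.2)
      _ = ENNReal.ofReal (1 / ε) := by rw [lintegral_const, measure_univ, mul_one]
  have hLtop : L ≠ ⊤ := (lt_of_le_of_lt hLle ENNReal.ofReal_lt_top).ne
  have hDeq : ∫ p, Dint p ∂ν = L.toReal := by
    rw [hLdef]
    exact integral_eq_lintegral_of_nonneg_ae (hDbound.mono fun p hp => hp.1)
      hDintM.aestronglyMeasurable
  have hlint : μfun (y / 2) = ENNReal.ofReal (2 * B y / y) * L := by
    rw [hμfun]
    dsimp only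
    rw [lintegral_congr_ae hpt]
    rw [lintegral_const_mul _ hDintM.ennreal_ofReal]
  have hBy : (0:ℝ) ≤ 2 * B y / y := div_nonneg (mul_nonneg (by norm_num) (hBnn y)) hy.le
  have hnm : νm (y / 2) = 2 * B y / y * ∫ p, Dint p ∂ν := by
    have h1 : ENNReal.ofReal (νm (y / 2))
        = ENNReal.ofReal (2 * B y / y * ∫ p, Dint p ∂ν) := by
      rw [hky', hlint, hDeq, ENNReal.ofReal_mul hBy, ENNReal.ofReal_toReal hLtop]
    have h2 : (0:ℝ) ≤ 2 * B y / y * ∫ p, Dint p ∂ν := by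
      rw [hDeq]
      exact mul_nonneg hBy ENNReal.toReal_nonneg
    exact (ENNReal.ofReal_eq_ofReal_iff (hνmnn _) h2).1 h1
  rw [hnm]
  have hD0 : (∫ p, Dint p ∂ν) ≠ 0 := ne_of_gt hpos
  field_simp
end

section
/- With notation as in the minorisation step, ∫_{r/2}^r φ_B(y) dy ≥ (e_min/e_max) exp(-L/e_min) (1 - exp(-ℓ/e_min)), where φ_B(y) = (B(2y)/(e_max y)) exp(-∫_0^y B(2s)/(e_min s) ds), ∫_0^{r/2} B(2x)/x dx ≤ L and ∫_{r/2}^r B(2x)/x dx ≥ ℓ. -/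
open MeasureTheory Set

/-- Strong aperiodicity bound: mass of the minorising density on the small set. -/
theorem strong_aperiodicity_bound
    (B : ℝ → ℝ) (hBc : Continuous B) (hBnn : ∀ x, 0 ≤ B x)
    (r L l emin emax : ℝ) (hr : 0 < r) (hL : 0 < L) (hl : 0 < l)
    (hemin : 0 < emin) (he : emin ≤ emax)
    (hintL : ∫ s in Set.Ioc (0 : ℝ) (r / 2), B (2 * s) / s ≤ L)
    (hintl : l ≤ ∫ s in Set.Ioc (r / 2) r, B (2 * s) / s) :
    emin / emax * Real.exp (-(L / emin)) * (1 - Real.exp (-(l / emin)))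
      ≤ ∫ y in Set.Ioc (r / 2) r,
          B (2 * y) / (emax * y) *
            Real.exp (-(∫ s in Set.Ioc (0 : ℝ) y, B (2 * s) / (emin * s))) := by
  have hr2 : (0:ℝ) < r / 2 := by linarith
  have hemax : (0:ℝ) < emax := lt_of_lt_of_le hemin he
  set f : ℝ → ℝ := fun s => B (2 * s) / s with hfdef
  set g : ℝ → ℝ := fun s => B (2 * s) / (emin * s) with hgdef
  have hgm : Measurable g := by
    exact ((hBc.comp (continuous_const.mul continuous_id)).measurable).div
      (measurable_const.mul measurable_id)
  have hgcont : ∀ x : ℝ, 0 < x → ContinuousAt g x := by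
    intro x hx
    exact ContinuousAt.div ((hBc.comp (continuous_const.mul continuous_id)).continuousAt)
      ((continuous_const.mul continuous_id).continuousAt)
      (by positivity)
  have hgf : ∀ s : ℝ, s ≠ 0 → emin * g s = f s := by
    intro s hs
    simp only [hgdef, hfdef]
    field_simp
  have e3 : Real.exp (-(l/emin)) ≤ 1 := by
    rw [← Real.exp_zero]
    exact Real.exp_le_exp.mpr (by nlinarith [div_pos hl hemin])
  by_cases hInt : IntegrableOn f (Ioc 0 (r/2)) volume
  · -- integrable case: FTC
    have hIntg : IntegrableOn g (Ioc 0 (r/2)) volume := by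
      have h1 : IntegrableOn (fun s => emin⁻¹ * f s) (Ioc 0 (r/2)) volume :=
        hInt.const_mul _
      apply h1.congr_fun ?_ measurableSet_Ioc
      intro s hs
      have := hgf s (ne_of_gt hs.1)
      field_simp
      linarith [this]
    have hgcontOn : ContinuousOn g (Icc (r/2) r) := fun x hx =>
      (hgcont x (lt_of_lt_of_le hr2 hx.1)).continuousWithinAt
    have hii : ∀ x ∈ Icc (r/2) r, IntervalIntegrable g volume 0 x := by
      intro x hx
      rw [intervalIntegrable_iff_integrableOn_Ioc_of_le (le_trans hr2.le hx.1)]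
      have h2 : IntegrableOn g (Ioc (r/2) x) volume := by
        apply (ContinuousOn.integrableOn_Icc ?_).mono_set Ioc_subset_Icc_self
        intro s hs
        exact (hgcont s (lt_of_lt_of_le hr2 hs.1)).continuousWithinAt
      have := hIntg.union h2
      rwa [Ioc_union_Ioc_eq_Ioc hr2.le hx.1] at this
    set G : ℝ → ℝ := fun x => ∫ s in (0:ℝ)..x, g s with hGdef
    have hGderiv : ∀ x ∈ Icc (r/2) r, HasDerivAt G (g x) x := by
      intro x hx
      exact intervalIntegral.integral_hasDerivAt_right (hii x hx)
        (hgm.stronglyMeasurable.stronglyMeasurableAtFilter)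
        (hgcont x (lt_of_lt_of_le hr2 hx.1))
    have hGcontOn : ContinuousOn G (Icc (r/2) r) := fun x hx =>
      ((hGderiv x hx).continuousAt).continuousWithinAt
    have hint : IntervalIntegrable (fun y => g y * Real.exp (-(G y))) volume (r/2) r := by
      apply ContinuousOn.intervalIntegrable
      rw [uIcc_of_le (by linarith : r/2 ≤ r)]
      exact hgcontOn.mul (Real.continuous_exp.comp_continuousOn hGcontOn.neg)
    have hFTC : ∫ y in (r/2)..r, g y * Real.exp (-(G y))
        = Real.exp (-(G (r/2))) - Real.exp (-(G r)) := by
      have h := intervalIntegral.integral_eq_sub_of_hasDerivAt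
        (f := fun y => -Real.exp (-(G y)))
        (f' := fun y => g y * Real.exp (-(G y))) ?_ hint
      · rw [h]; ring
      · intro x hx
        rw [uIcc_of_le (by linarith : r/2 ≤ r)] at hx
        have h2 := (((hGderiv x hx).neg).exp).neg
        convert h2 using 1
        show g x * Real.exp (-G x) = -(Real.exp (-G x) * -g x)
        ring
        rfl
    have hcongr : (∫ y in Ioc (r/2) r, B (2*y)/(emax*y)
          * Real.exp (-(∫ s in Ioc (0:ℝ) y, B (2*s)/(emin*s))))
        = ∫ y in Ioc (r/2) r, emin/emax * (g y * Real.exp (-(G y))) := by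
      apply setIntegral_congr_fun measurableSet_Ioc
      intro y hy
      have hy0 : 0 < y := lt_trans hr2 hy.1
      simp only [hgdef, hGdef]
      rw [intervalIntegral.integral_of_le hy0.le]
      have hyne : y ≠ 0 := ne_of_gt hy0
      field_simp
      rw [show (fun s => B (2 * s) / (s * emin)) = fun x => B (2 * x) / (emin * x) from
        funext fun s => by ring]
    have hIocInt : (∫ y in Ioc (r/2) r, g y * Real.exp (-(G y)))
        = ∫ y in (r/2)..r, g y * Real.exp (-(G y)) :=
      (intervalIntegral.integral_of_le (by linarith)).symm
    rw [hcongr, integral_const_mul, hIocInt, hFTC]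
    -- bounds on G
    have hG1 : G (r/2) ≤ L / emin := by
      have h1 : G (r/2) = ∫ s in Ioc (0:ℝ) (r/2), g s :=
        intervalIntegral.integral_of_le hr2.le
      have h2 : (∫ s in Ioc (0:ℝ) (r/2), g s)
          = ∫ s in Ioc (0:ℝ) (r/2), emin⁻¹ * f s := by
        apply setIntegral_congr_fun measurableSet_Ioc
        intro s hs
        have := hgf s (ne_of_gt hs.1)
        field_simp
        linarith [this]
      rw [h1, h2, integral_const_mul]
      calc emin⁻¹ * ∫ s in Ioc (0:ℝ) (r/2), f s
          ≤ emin⁻¹ * L := mul_le_mul_of_nonneg_left hintL (by positivity)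
        _ = L / emin := inv_mul_eq_div _ _
    have hiirr : IntervalIntegrable g volume (r/2) r := by
      apply ContinuousOn.intervalIntegrable
      rwa [uIcc_of_le (by linarith : r/2 ≤ r)]
    have hG2 : l / emin ≤ G r - G (r/2) := by
      have hsplit : G (r/2) + ∫ y in (r/2)..r, g y = G r :=
        intervalIntegral.integral_add_adjacent_intervals
          (hii (r/2) ⟨le_refl _, by linarith⟩) hiirr
      have h1 : (∫ y in (r/2)..r, g y) = ∫ s in Ioc (r/2) r, g s :=
        intervalIntegral.integral_of_le (by linarith)
      have h2 : (∫ s in Ioc (r/2) r, g s)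
          = ∫ s in Ioc (r/2) r, emin⁻¹ * f s := by
        apply setIntegral_congr_fun measurableSet_Ioc
        intro s hs
        have := hgf s (ne_of_gt (lt_trans hr2 hs.1))
        field_simp
        linarith [this]
      have h3 : l / emin ≤ ∫ y in (r/2)..r, g y := by
        rw [h1, h2, integral_const_mul]
        calc l / emin = emin⁻¹ * l := (inv_mul_eq_div _ _).symm
          _ ≤ emin⁻¹ * ∫ s in Ioc (r/2) r, f s :=
              mul_le_mul_of_nonneg_left hintl (by positivity)
      linarith
    have key : Real.exp (-(L/emin)) * (1 - Real.exp (-(l/emin)))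
        ≤ Real.exp (-(G (r/2))) - Real.exp (-(G r)) := by
      have e1 : Real.exp (-(L/emin)) ≤ Real.exp (-(G (r/2))) :=
        Real.exp_le_exp.mpr (by linarith)
      have e2 : Real.exp (-(G r)) ≤ Real.exp (-(G (r/2))) * Real.exp (-(l/emin)) := by
        rw [← Real.exp_add]
        exact Real.exp_le_exp.mpr (by linarith)
      nlinarith [Real.exp_pos (-(G (r/2))), Real.exp_pos (-(l/emin)),
        Real.exp_pos (-(L/emin))]
    rw [mul_assoc]
    exact mul_le_mul_of_nonneg_left key (by positivity)
  · -- non-integrable case: inner integrals vanish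
    have hgnot : ∀ y : ℝ, r/2 ≤ y → ¬ IntegrableOn g (Ioc 0 y) volume := by
      intro y hy hcon
      apply hInt
      have h1 : IntegrableOn g (Ioc 0 (r/2)) volume :=
        hcon.mono_set (Ioc_subset_Ioc_right hy)
      have h2 : IntegrableOn (fun s => emin * g s) (Ioc 0 (r/2)) volume :=
        h1.const_mul _
      apply h2.congr_fun ?_ measurableSet_Ioc
      intro s hs
      exact (hgf s (ne_of_gt hs.1))
    have hcongr : (∫ y in Ioc (r/2) r, B (2*y)/(emax*y)
          * Real.exp (-(∫ s in Ioc (0:ℝ) y, B (2*s)/(emin*s))))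
        = ∫ y in Ioc (r/2) r, emax⁻¹ * f y := by
      apply setIntegral_congr_fun measurableSet_Ioc
      intro y hy
      have hy0 : 0 < y := lt_trans hr2 hy.1
      have h0 : (∫ s in Ioc (0:ℝ) y, B (2*s)/(emin*s)) = 0 :=
        integral_undef (hgnot y hy.1.le)
      simp only [hfdef]
      rw [h0]
      simp only [neg_zero, Real.exp_zero, mul_one]
      have hyne : y ≠ 0 := ne_of_gt hy0
      field_simp
    rw [hcongr, integral_const_mul]
    have hbound : emax⁻¹ * l ≤ emax⁻¹ * ∫ y in Ioc (r/2) r, f y :=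
      mul_le_mul_of_nonneg_left hintl (by positivity)
    have e2 : Real.exp (-(L/emin)) ≤ 1 := by
      rw [← Real.exp_zero]
      exact Real.exp_le_exp.mpr (by nlinarith [div_pos hL hemin])
    have e4 : -(l/emin) + 1 ≤ Real.exp (-(l/emin)) := Real.add_one_le_exp _
    have hfin : emin / emax * Real.exp (-(L/emin)) * (1 - Real.exp (-(l/emin)))
        ≤ emax⁻¹ * l := by
      have hA : 0 ≤ Real.exp (-(L/emin)) := (Real.exp_pos _).le
      have h1 : emin * (1 - Real.exp (-(l/emin))) ≤ l := by
        have := mul_le_mul_of_nonneg_left e4 hemin.le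
        have hle : emin * (l/emin) = l := by field_simp
        nlinarith
      have h2 : Real.exp (-(L/emin)) * (1 - Real.exp (-(l/emin)))
          ≤ (1 - Real.exp (-(l/emin))) := by nlinarith
      have h3 : emin / emax * Real.exp (-(L/emin)) * (1 - Real.exp (-(l/emin)))
          = (emin * (Real.exp (-(L/emin)) * (1 - Real.exp (-(l/emin))))) / emax := by
        ring
      rw [h3, div_le_iff₀ hemax]
      have : emin * (Real.exp (-(L/emin)) * (1 - Real.exp (-(l/emin)))) ≤ l := by
        nlinarith
      calc emin * (Real.exp (-(L/emin)) * (1 - Real.exp (-(l/emin)))) ≤ l := this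
        _ = emax⁻¹ * l * emax := by field_simp
    linarith
end

section
/- Fix 0 < γ < 1/2, h ∈ (0,1), and an integer N ≥ 0 with n = 2^N. Let k* = ⌊ |log h| / |log γ| ⌋. Then for each k ≤ N, 2^k Σ_{i=1}^k min(h, γ^i) ≤ 2^k (k* h + γ^{k*+1}/(1-γ)) ≤ C 2^k h (1 + |log h|) for a constant C depending only on γ, and hence Σ_{k=0}^N 2^k Σ_{i=1}^k min(h, γ^i) ≤ C' 2^N h (1 + |log h|). -/
open Finset

/-- `k* = ⌊|log h| / |log γ|⌋`. -/
noncomputable def kstar (γ h : ℝ) : ℕ := ⌊|Real.log h| / |Real.log γ|⌋₊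

lemma geom_Ico_le {γ : ℝ} (h0 : 0 ≤ γ) (h1 : γ < 1) (a b : ℕ) :
    ∑ i ∈ Finset.Ico a b, γ ^ i ≤ γ ^ a / (1 - γ) := by
  rcases le_or_gt a b with hab | hab
  · rw [geom_sum_Ico (ne_of_lt h1) hab]
    rw [show (γ ^ b - γ ^ a) / (γ - 1) = (γ ^ a - γ ^ b) / (1 - γ) by
      rw [div_eq_div_iff (sub_ne_zero.mpr (ne_of_lt h1)) (sub_ne_zero.mpr (ne_of_gt h1))]
      ring]
    have hb : (0:ℝ) ≤ γ ^ b := pow_nonneg h0 b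
    gcongr
    · linarith
  · rw [Finset.Ico_eq_empty (by omega)]
    simp only [Finset.sum_empty]
    have : (0:ℝ) < 1 - γ := by linarith
    positivity

/-- Counting estimate in the variance bound for kernel estimation over the full binary
tree: for `0 < γ < 1/2`, there are constants depending only on `γ` such that for every
`h ∈ (0,1)` and every `N`, the sums `2^k Σ_{i=1}^k min(h, γ^i)` are controlled,
producing the logarithmic factor `1 + |log h|`. -/
theorem full_tree_min_sum_estimate (γ : ℝ) (hγ0 : 0 < γ) (hγ : γ < 1 / 2) :
    ∃ C C' : ℝ, 0 < C ∧ 0 < C' ∧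
      ∀ h : ℝ, 0 < h → h < 1 → ∀ N : ℕ,
        (∀ k ≤ N,
          (2 : ℝ) ^ k * (∑ i ∈ Finset.Icc 1 k, min h (γ ^ i))
            ≤ 2 ^ k * ((kstar γ h : ℝ) * h + γ ^ (kstar γ h + 1) / (1 - γ)) ∧
          (2 : ℝ) ^ k * ((kstar γ h : ℝ) * h + γ ^ (kstar γ h + 1) / (1 - γ))
            ≤ C * 2 ^ k * h * (1 + |Real.log h|)) ∧
        (∑ k ∈ Finset.range (N + 1),
            (2 : ℝ) ^ k * ∑ i ∈ Finset.Icc 1 k, min h (γ ^ i))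
          ≤ C' * 2 ^ N * h * (1 + |Real.log h|) := by
  have hγ1 : γ < 1 := by linarith
  have hγ1' : (0:ℝ) < 1 - γ := by linarith
  have hlogγ : Real.log γ < 0 := Real.log_neg hγ0 hγ1
  set L : ℝ := -Real.log γ with hL
  have hLpos : 0 < L := by simp only [hL]; linarith
  set C : ℝ := 1 / L + 1 / (1 - γ) with hC
  have hCpos : 0 < C := by positivity
  refine ⟨C, 2 * C, hCpos, by positivity, ?_⟩
  intro h hh0 hh1 N
  have hlogh : Real.log h < 0 := Real.log_neg hh0 hh1
  set k' := kstar γ h with hk'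
  have habsγ : |Real.log γ| = L := abs_of_neg hlogγ
  have habsh : |Real.log h| = -Real.log h := abs_of_neg hlogh
  have hk'le : (k' : ℝ) ≤ (-Real.log h) / L := by
    rw [← habsh, ← habsγ, hk']
    exact Nat.floor_le (by positivity)
  have hγpow : γ ^ (k' + 1) ≤ h := by
    have h1 : |Real.log h| / |Real.log γ| < (k' : ℝ) + 1 := by
      rw [hk']; exact Nat.lt_floor_add_one _
    rw [habsh, habsγ] at h1
    have h2 : -Real.log h < ((k' : ℝ) + 1) * L := (div_lt_iff₀ hLpos).mp h1
    have h3 : Real.log (γ ^ (k' + 1)) < Real.log h := by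
      rw [Real.log_pow]
      push_cast
      simp only [hL] at h2
      nlinarith
    exact le_of_lt ((Real.log_lt_log_iff (by positivity) hh0).mp h3)
  have key : ∀ k : ℕ, (∑ i ∈ Finset.Icc 1 k, min h (γ ^ i))
      ≤ (k' : ℝ) * h + γ ^ (k' + 1) / (1 - γ) := by
    intro k
    rw [← Finset.sum_filter_add_sum_filter_not (Finset.Icc 1 k) (fun i => i ≤ k')]
    have part1 : ∑ i ∈ (Finset.Icc 1 k).filter (fun i => i ≤ k'), min h (γ ^ i)
        ≤ (k' : ℝ) * h := by
      calc ∑ i ∈ (Finset.Icc 1 k).filter (fun i => i ≤ k'), min h (γ ^ i)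
          ≤ ∑ _i ∈ (Finset.Icc 1 k).filter (fun i => i ≤ k'), h :=
            Finset.sum_le_sum (fun i _ => min_le_left _ _)
        _ = ((Finset.Icc 1 k).filter (fun i => i ≤ k')).card * h := by
            rw [Finset.sum_const, nsmul_eq_mul]
        _ ≤ (k' : ℝ) * h := by
            apply mul_le_mul_of_nonneg_right _ hh0.le
            have hsub : (Finset.Icc 1 k).filter (fun i => i ≤ k') ⊆ Finset.Icc 1 k' := by
              intro i hi
              simp only [Finset.mem_filter, Finset.mem_Icc] at hi ⊢
              omega
            have := Finset.card_le_card hsub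
            rw [Nat.card_Icc] at this
            exact_mod_cast le_trans (Nat.cast_le.mpr this) (by norm_num)
    have part2 : ∑ i ∈ (Finset.Icc 1 k).filter (fun i => ¬ i ≤ k'), min h (γ ^ i)
        ≤ γ ^ (k' + 1) / (1 - γ) := by
      calc ∑ i ∈ (Finset.Icc 1 k).filter (fun i => ¬ i ≤ k'), min h (γ ^ i)
          ≤ ∑ i ∈ (Finset.Icc 1 k).filter (fun i => ¬ i ≤ k'), γ ^ i :=
            Finset.sum_le_sum (fun i _ => min_le_right _ _)
        _ ≤ ∑ i ∈ Finset.Ico (k' + 1) (k + 1), γ ^ i := by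
            apply Finset.sum_le_sum_of_subset_of_nonneg
            · intro i hi
              simp only [Finset.mem_filter, Finset.mem_Icc, Finset.mem_Ico] at hi ⊢
              omega
            · intro i _ _
              positivity
        _ ≤ γ ^ (k' + 1) / (1 - γ) := geom_Ico_le hγ0.le hγ1 _ _
    linarith
  have key2 : (k' : ℝ) * h + γ ^ (k' + 1) / (1 - γ) ≤ C * h * (1 + |Real.log h|) := by
    rw [habsh, hC]
    have h1 : (k' : ℝ) * h ≤ (-Real.log h) / L * h :=
      mul_le_mul_of_nonneg_right hk'le hh0.le
    have h2 : γ ^ (k' + 1) / (1 - γ) ≤ h / (1 - γ) := by gcongr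
    have hu : (0:ℝ) < 1 / L := by positivity
    have hv : (0:ℝ) < 1 / (1 - γ) := by positivity
    have hm : (0:ℝ) < -Real.log h := by linarith
    have e1 : (-Real.log h) / L * h = h * (-Real.log h) * (1 / L) := by ring
    have e2 : h / (1 - γ) = h * (1 / (1 - γ)) := by ring
    have e3 : (1 / L + 1 / (1 - γ)) * h * (1 + -Real.log h)
        = h * (1 / L) + h * (-Real.log h) * (1 / L) + h * (1 / (1 - γ))
          + h * (-Real.log h) * (1 / (1 - γ)) := by ring
    nlinarith [mul_pos hh0 hu, mul_pos (mul_pos hh0 hm) hv]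
  constructor
  · intro k _
    constructor
    · exact mul_le_mul_of_nonneg_left (key k) (by positivity)
    · calc (2 : ℝ) ^ k * ((k' : ℝ) * h + γ ^ (k' + 1) / (1 - γ))
          ≤ (2 : ℝ) ^ k * (C * h * (1 + |Real.log h|)) :=
            mul_le_mul_of_nonneg_left key2 (by positivity)
        _ = C * 2 ^ k * h * (1 + |Real.log h|) := by ring
  · have hX : (0:ℝ) ≤ C * h * (1 + |Real.log h|) := by positivity
    calc ∑ k ∈ Finset.range (N + 1), (2 : ℝ) ^ k * ∑ i ∈ Finset.Icc 1 k, min h (γ ^ i)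
        ≤ ∑ k ∈ Finset.range (N + 1), (2 : ℝ) ^ k * (C * h * (1 + |Real.log h|)) := by
          apply Finset.sum_le_sum
          intro k _
          exact mul_le_mul_of_nonneg_left (le_trans (key k) key2) (by positivity)
      _ = (∑ k ∈ Finset.range (N + 1), (2 : ℝ) ^ k) * (C * h * (1 + |Real.log h|)) := by
          rw [← Finset.sum_mul]
      _ ≤ (2 : ℝ) ^ (N + 1) * (C * h * (1 + |Real.log h|)) := by
          apply mul_le_mul_of_nonneg_right _ hX
          have := geom_sum_eq (by norm_num : (2:ℝ) ≠ 1) (N + 1)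
          rw [this]
          norm_num
      _ = 2 * C * 2 ^ N * h * (1 + |Real.log h|) := by rw [pow_succ]; ring
end
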